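/- Let σθ² > 0, σv² > 0, σn² > 0, λ > 0, set A = σθ²σv²/(σθ²+σv²) and L = σθ²(1 − 1/e) + A/e. For an integer M ≥ 2 and T > 0 define F_M(T) = σθ²·[1 − M e^{−λT}(1 − e^{−λT})^{M−1}] + M(1 − e^{−λT})^{M−1} · ∫_T^∞ (1/σθ² + (x e^{λT}/M)/((x σv² e^{λT}/M) + σn²))^{−1} λ e^{−λx} dx. Then: (i) for every M ≥ 2 and every T > 0, F_M(T) ≥ σθ²·[1 − (1 − 1/M)^{M−1}] + (1 − 1/M)^{M−1}·A; and (ii) if for each M ≥ 2, T*_M > 0 is a minimizer of F_M over (0,∞), then F_M(T*_M) → L as M → ∞, with F_M(T*_M) ≤ F_M((1/λ)ln(M)) so that the convergence to L is at least as fast as 1/ln(M). -/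

import Mathlib

open MeasureTheory Filter Real

private lemma key_pow_ineq {M : ℕ} (hM : 2 ≤ M) {u : ℝ} (hu0 : 0 < u) (hu1 : u < 1) :
    (M : ℝ) * u * (1 - u) ^ (M - 1) ≤ (1 - 1 / (M : ℝ)) ^ (M - 1) := by
  have hM2 : (2:ℝ) ≤ (M:ℝ) := by exact_mod_cast hM
  have hn : ((M - 1 : ℕ) : ℝ) = (M : ℝ) - 1 := by
    have h1 : (1:ℕ) ≤ M := by omega
    push_cast [Nat.cast_sub h1]; ring
  have h1u : (0:ℝ) < 1 - u := by linarith
  have h1m : (0:ℝ) < 1 - 1/(M:ℝ) := by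
    have : 1/(M:ℝ) ≤ 1/2 := by
      apply one_div_le_one_div_of_le <;> linarith
    linarith
  have hL : 0 < (M:ℝ) * u * (1 - u) ^ (M-1) := by positivity
  have hR : 0 < (1 - 1/(M:ℝ)) ^ (M-1) := by positivity
  rw [← Real.exp_log hL, ← Real.exp_log hR]
  apply Real.exp_le_exp.mpr
  rw [Real.log_mul (by positivity) (by positivity), Real.log_pow, Real.log_pow, hn]
  have e1 : Real.log ((M:ℝ) * u) ≤ (M:ℝ) * u - 1 :=
    Real.log_le_sub_one_of_pos (by positivity)
  have e2 : Real.log ((1 - u) / (1 - 1/(M:ℝ))) ≤ (1-u)/(1-1/(M:ℝ)) - 1 :=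
    Real.log_le_sub_one_of_pos (by positivity)
  rw [Real.log_div (by linarith) (by linarith)] at e2
  have e3 : ((M:ℝ)-1) * ((1-u)/(1-1/(M:ℝ)) - 1) = 1 - (M:ℝ)*u := by
    have hMne : (M:ℝ) ≠ 0 := by linarith
    have hM1 : (M:ℝ) - 1 ≠ 0 := by linarith
    field_simp
    ring
  have e4 : Real.log (1-u) ≤ Real.log (1 - 1/(M:ℝ)) + ((1-u)/(1-1/(M:ℝ)) - 1) := by
    linarith
  have e5 : ((M:ℝ)-1) * Real.log (1-u) ≤ ((M:ℝ)-1) * (Real.log (1 - 1/(M:ℝ)) + ((1-u)/(1-1/(M:ℝ)) - 1)) :=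
    mul_le_mul_of_nonneg_left e4 (by linarith)
  nlinarith [e1, e5, e3]

private lemma integral_lam_exp {lam : ℝ} (hlam : 0 < lam) (T : ℝ) :
    ∫ x in Set.Ioi T, lam * Real.exp (-lam * x) = Real.exp (-lam * T) := by
  have hint : IntegrableOn (fun x => lam * Real.exp (-lam * x)) (Set.Ioi T) := by
    have := (exp_neg_integrableOn_Ioi T hlam).const_mul lam
    simpa [neg_mul, IntegrableOn] using this
  have htend : Tendsto (fun x : ℝ => -Real.exp (-lam * x)) atTop (nhds 0) := by
    have h1 : Tendsto (fun x : ℝ => lam * x) atTop atTop :=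
      Tendsto.const_mul_atTop hlam tendsto_id
    have h2 := Real.tendsto_exp_atBot.comp (tendsto_neg_atTop_atBot.comp h1)
    have h3 : Tendsto (fun x : ℝ => Real.exp (-lam * x)) atTop (nhds 0) := by
      convert h2 using 2 with x
      simp [Function.comp, neg_mul]
    simpa using h3.neg
  have hderiv : ∀ x ∈ Set.Ici T, HasDerivAt (fun x : ℝ => -Real.exp (-lam * x))
      (lam * Real.exp (-lam * x)) x := by
    intro x _
    have h1 : HasDerivAt (fun x : ℝ => -lam * x) (-lam) x := by
      simpa using (hasDerivAt_id x).const_mul (-lam)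
    have h2 : HasDerivAt (fun x : ℝ => -Real.exp (-lam * x)) (-(Real.exp (-lam * x) * -lam)) x :=
      (h1.exp).neg
    convert h2 using 1
    ring
  have := integral_Ioi_of_hasDerivAt_of_tendsto' hderiv hint htend
  rw [this]; ring

private lemma int_bounds (sθ sv sn lam : ℝ) (hθ : 0 < sθ) (hv : 0 < sv)
    (hn : 0 < sn) (hlam : 0 < lam) {T c : ℝ} (hT : 0 < T) (hc : 0 < c) :
    IntegrableOn (fun x => (1/sθ + x * c / (x * sv * c + sn))⁻¹ * (lam * Real.exp (-lam * x)))
        (Set.Ioi T) ∧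
    sθ * sv / (sθ + sv) * Real.exp (-lam * T)
      ≤ (∫ x in Set.Ioi T, (1/sθ + x * c / (x * sv * c + sn))⁻¹ * (lam * Real.exp (-lam * x)))
    ∧ (∫ x in Set.Ioi T, (1/sθ + x * c / (x * sv * c + sn))⁻¹ * (lam * Real.exp (-lam * x)))
      ≤ (1/sθ + T * c / (T * sv * c + sn))⁻¹ * Real.exp (-lam * T) := by
  set f := fun x : ℝ => (1/sθ + x * c / (x * sv * c + sn))⁻¹ * (lam * Real.exp (-lam * x)) with hf
  have hden : ∀ x : ℝ, 0 ≤ x → 0 < x * sv * c + sn := by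
    intro x hx
    have := mul_nonneg (mul_nonneg hx hv.le) hc.le
    linarith
  have hinner : ∀ x : ℝ, 0 ≤ x → 0 < 1/sθ + x * c / (x * sv * c + sn) := by
    intro x hx
    have := hden x hx
    have h2 : 0 ≤ x * c / (x * sv * c + sn) := div_nonneg (by positivity) this.le
    positivity
  have hinv_le : ∀ x : ℝ, 0 ≤ x → (1/sθ + x * c / (x * sv * c + sn))⁻¹ ≤ sθ := by
    intro x hx
    have h2 : 0 ≤ x * c / (x * sv * c + sn) := div_nonneg (by positivity) (hden x hx).le
    have h3 : 1/sθ ≤ 1/sθ + x * c / (x * sv * c + sn) := by linarith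
    calc (1/sθ + x * c / (x * sv * c + sn))⁻¹ ≤ (1/sθ)⁻¹ :=
          inv_anti₀ (by positivity) h3
      _ = sθ := by rw [one_div, inv_inv]
  have hA_le : ∀ x : ℝ, 0 < x → sθ * sv / (sθ + sv) ≤ (1/sθ + x * c / (x * sv * c + sn))⁻¹ := by
    intro x hx
    have hd := hden x hx.le
    have h1 : x * c / (x * sv * c + sn) ≤ 1/sv := by
      rw [div_le_div_iff₀ hd hv]
      nlinarith
    have h2 : 1/sθ + x * c / (x * sv * c + sn) ≤ 1/sθ + 1/sv := by linarith
    have h3 : (1/sθ + 1/sv)⁻¹ ≤ (1/sθ + x * c / (x * sv * c + sn))⁻¹ :=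
      inv_anti₀ (hinner x hx.le) h2
    have h4 : (1/sθ + 1/sv)⁻¹ = sθ * sv / (sθ + sv) := by
      rw [div_add_div _ _ (by positivity) (by positivity)]
      rw [one_mul, mul_one, inv_div]
      rw [show sv + sθ = sθ + sv by ring]
    linarith
  have hmono : ∀ x : ℝ, T ≤ x →
      (1/sθ + x * c / (x * sv * c + sn))⁻¹ ≤ (1/sθ + T * c / (T * sv * c + sn))⁻¹ := by
    intro x hx
    have hx0 : 0 < x := lt_of_lt_of_le hT hx
    have hdx := hden x hx0.le
    have hdT := hden T hT.le
    have h1 : T * c / (T * sv * c + sn) ≤ x * c / (x * sv * c + sn) := by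
      rw [div_le_div_iff₀ hdT hdx]
      nlinarith [mul_nonneg (mul_nonneg (sub_nonneg.mpr hx) hc.le) hn.le]
    exact inv_anti₀ (hinner T hT.le) (by linarith)
  have hexp_int : IntegrableOn (fun x : ℝ => lam * Real.exp (-lam * x)) (Set.Ioi T) := by
    have := (exp_neg_integrableOn_Ioi T hlam).const_mul lam
    simpa [neg_mul, IntegrableOn] using this
  have hcont : ContinuousOn f (Set.Ioi T) := by
    have h1 : ContinuousOn (fun x : ℝ => x * c / (x * sv * c + sn)) (Set.Ioi T) := by
      apply ContinuousOn.div (by fun_prop) (by fun_prop)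
      intro x hx
      exact (hden x (le_of_lt (lt_trans hT hx))).ne'
    have h2 : ContinuousOn (fun x : ℝ => (1/sθ + x * c / (x * sv * c + sn))⁻¹) (Set.Ioi T) := by
      apply ContinuousOn.inv₀ (continuousOn_const.add h1)
      intro x hx
      exact (hinner x (le_of_lt (lt_trans hT hx))).ne'
    exact h2.mul (by fun_prop)
  have hfint : IntegrableOn f (Set.Ioi T) := by
    apply Integrable.mono' (hexp_int.const_mul sθ)
      (hcont.aestronglyMeasurable measurableSet_Ioi)
    rw [ae_restrict_iff' measurableSet_Ioi]
    apply ae_of_all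
    intro x hx
    have hx0 : 0 < x := lt_trans hT hx
    have h0 : 0 ≤ f x := by
      apply mul_nonneg (le_of_lt (inv_pos.mpr (hinner x hx0.le)))
      positivity
    rw [Real.norm_eq_abs, abs_of_nonneg h0]
    calc f x ≤ sθ * (lam * Real.exp (-lam * x)) :=
          mul_le_mul_of_nonneg_right (hinv_le x hx0.le) (by positivity)
      _ = sθ * (lam * Real.exp (-lam * x)) := rfl
  refine ⟨hfint, ?_, ?_⟩
  · have h1 : ∫ x in Set.Ioi T, sθ * sv / (sθ + sv) * (lam * Real.exp (-lam * x))
        = sθ * sv / (sθ + sv) * Real.exp (-lam * T) := by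
      rw [MeasureTheory.integral_const_mul, integral_lam_exp hlam]
    rw [← h1]
    apply setIntegral_mono_on (hexp_int.const_mul _) hfint measurableSet_Ioi
    intro x hx
    exact mul_le_mul_of_nonneg_right (hA_le x (lt_trans hT hx)) (by positivity)
  · have h1 : ∫ x in Set.Ioi T, (1/sθ + T * c / (T * sv * c + sn))⁻¹ * (lam * Real.exp (-lam * x))
        = (1/sθ + T * c / (T * sv * c + sn))⁻¹ * Real.exp (-lam * T) := by
      rw [MeasureTheory.integral_const_mul, integral_lam_exp hlam]
    rw [← h1]
    apply setIntegral_mono_on hfint (hexp_int.const_mul _) measurableSet_Ioi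
    intro x hx
    exact mul_le_mul_of_nonneg_right (hmono x (le_of_lt hx)) (by positivity)
/-- Bounds for the channel-aware ALOHA scheme with optimized transmission
threshold under constant (normalized) power allocation: with
`A = σθ²σv²/(σθ²+σv²)` and `L = σθ²(1-1/e) + A/e`,
(i) for every `M ≥ 2` and `T > 0`,
`F_M(T) ≥ σθ²[1 − (1-1/M)^{M-1}] + (1-1/M)^{M-1}A`;
(ii) if `T*_M > 0` minimizes `F_M` over `(0,∞)`, then `F_M(T*_M) → L` as
`M → ∞`, and `F_M(T*_M) ≤ F_M((1/λ)ln M)`. -/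
theorem optimal_threshold_distortion_bounds (sθ sv sn lam : ℝ)
    (hθ : 0 < sθ) (hv : 0 < sv) (hn : 0 < sn) (hlam : 0 < lam)
    (A L : ℝ) (hA : A = sθ * sv / (sθ + sv))
    (hL : L = sθ * (1 - 1 / Real.exp 1) + A / Real.exp 1)
    (F : ℕ → ℝ → ℝ)
    (hF : ∀ M : ℕ, 2 ≤ M → ∀ T : ℝ, 0 < T →
      F M T = sθ * (1 - (M : ℝ) * Real.exp (-lam * T)
          * (1 - Real.exp (-lam * T)) ^ (M - 1))
        + (M : ℝ) * (1 - Real.exp (-lam * T)) ^ (M - 1) *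
          ∫ x in Set.Ioi T,
            (1 / sθ + (x * Real.exp (lam * T) / M) /
              (x * sv * Real.exp (lam * T) / M + sn))⁻¹
              * (lam * Real.exp (-lam * x))) :
    (∀ M : ℕ, 2 ≤ M → ∀ T : ℝ, 0 < T →
      sθ * (1 - (1 - 1 / (M : ℝ)) ^ (M - 1)) + (1 - 1 / (M : ℝ)) ^ (M - 1) * A
        ≤ F M T) ∧
    (∀ Ts : ℕ → ℝ, (∀ M : ℕ, 2 ≤ M → 0 < Ts M) →
      (∀ M : ℕ, 2 ≤ M → ∀ T : ℝ, 0 < T → F M (Ts M) ≤ F M T) →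
      Tendsto (fun M : ℕ => F M (Ts M)) atTop (nhds L) ∧
        ∀ M : ℕ, 2 ≤ M → F M (Ts M) ≤ F M (Real.log M / lam)) := by
  subst hA
  subst hL
  have hApos : 0 < sθ * sv / (sθ + sv) := by positivity
  have hAlt : sθ * sv / (sθ + sv) < sθ := by
    rw [div_lt_iff₀ (by positivity)]
    nlinarith
  have hFc : ∀ M : ℕ, 2 ≤ M → ∀ T : ℝ, 0 < T →
      F M T = sθ * (1 - (M : ℝ) * Real.exp (-lam * T)
          * (1 - Real.exp (-lam * T)) ^ (M - 1))
        + (M : ℝ) * (1 - Real.exp (-lam * T)) ^ (M - 1) *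
          ∫ x in Set.Ioi T,
            (1 / sθ + x * (Real.exp (lam * T) / (M : ℝ)) /
              (x * sv * (Real.exp (lam * T) / (M : ℝ)) + sn))⁻¹
              * (lam * Real.exp (-lam * x)) := by
    intro M hM T hT
    rw [hF M hM T hT]
    simp only [mul_div_assoc]
  have part1 : ∀ M : ℕ, 2 ≤ M → ∀ T : ℝ, 0 < T →
      sθ * (1 - (1 - 1 / (M : ℝ)) ^ (M - 1))
        + (1 - 1 / (M : ℝ)) ^ (M - 1) * (sθ * sv / (sθ + sv)) ≤ F M T := by
    intro M hM T hT
    have hM2 : (2:ℝ) ≤ (M:ℝ) := by exact_mod_cast hM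
    have hMpos : (0:ℝ) < M := by linarith
    have hc : 0 < Real.exp (lam * T) / (M:ℝ) := by positivity
    obtain ⟨-, hlow, -⟩ := int_bounds sθ sv sn lam hθ hv hn hlam hT hc
    rw [hFc M hM T hT]
    set I := ∫ x in Set.Ioi T,
        (1 / sθ + x * (Real.exp (lam * T) / (M : ℝ)) /
          (x * sv * (Real.exp (lam * T) / (M : ℝ)) + sn))⁻¹
          * (lam * Real.exp (-lam * x)) with hI
    set u := Real.exp (-lam * T) with hu
    have hu0 : 0 < u := Real.exp_pos _
    have hu1 : u < 1 := by
      rw [hu]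
      apply Real.exp_lt_one_iff.mpr
      nlinarith
    set q := (1 - u) ^ (M - 1) with hq
    set p := (1 - 1 / (M:ℝ)) ^ (M - 1) with hp
    have hkey : (M:ℝ) * u * q ≤ p := key_pow_ineq hM hu0 hu1
    have hq0 : (0:ℝ) ≤ q := by
      rw [hq]; apply pow_nonneg; linarith
    have h1 : 0 ≤ (M:ℝ) * q * (I - sθ * sv / (sθ + sv) * u) :=
      mul_nonneg (mul_nonneg hMpos.le hq0) (by linarith)
    have h2 : 0 ≤ (sθ - sθ * sv / (sθ + sv)) * (p - (M:ℝ) * u * q) :=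
      mul_nonneg (by linarith) (by linarith)
    nlinarith [h1, h2]
  refine ⟨part1, ?_⟩
  intro Ts hTs hmin
  have hlogpos : ∀ M : ℕ, 2 ≤ M → 0 < Real.log M / lam := by
    intro M hM
    have h1 : (1:ℝ) < M := by exact_mod_cast (by omega : 1 < M)
    exact div_pos (Real.log_pos h1) hlam
  refine ⟨?_, fun M hM => hmin M hM _ (hlogpos M hM)⟩
  have hUBest : ∀ M : ℕ, 2 ≤ M →
      F M (Real.log M / lam) ≤ sθ * (1 - (1 - 1/(M:ℝ))^(M-1))
        + (1 - 1/(M:ℝ))^(M-1) *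
          (1/sθ + (Real.log M / lam) / ((Real.log M / lam) * sv + sn))⁻¹ := by
    intro M hM
    have hM2 : (2:ℝ) ≤ (M:ℝ) := by exact_mod_cast hM
    have hMpos : (0:ℝ) < M := by linarith
    set T := Real.log M / lam with hTdef
    have hTpos : 0 < T := hlogpos M hM
    have hexpT : Real.exp (lam * T) = M := by
      rw [hTdef]
      have h1 : lam * (Real.log M / lam) = Real.log M := by field_simp
      rw [h1, Real.exp_log hMpos]
    have hc1 : Real.exp (lam * T) / (M:ℝ) = 1 := by
      rw [hexpT]; exact div_self hMpos.ne'
    have huM : Real.exp (-lam * T) = 1/(M:ℝ) := by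
      rw [neg_mul, Real.exp_neg, hexpT]
      exact (one_div _).symm
    have hc : 0 < Real.exp (lam * T) / (M:ℝ) := by rw [hc1]; norm_num
    obtain ⟨-, -, hup⟩ := int_bounds sθ sv sn lam hθ hv hn hlam hTpos hc
    rw [hFc M hM T hTpos]
    set I := ∫ x in Set.Ioi T,
        (1 / sθ + x * (Real.exp (lam * T) / (M : ℝ)) /
          (x * sv * (Real.exp (lam * T) / (M : ℝ)) + sn))⁻¹
          * (lam * Real.exp (-lam * x)) with hI
    rw [hc1, huM] at hup
    rw [huM]
    rw [mul_one, mul_one] at hup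
    set q := (1 - 1/(M:ℝ)) ^ (M - 1) with hq
    set D := (1/sθ + T / (T * sv + sn))⁻¹ with hD
    have hq0 : (0:ℝ) ≤ q := by
      rw [hq]; apply pow_nonneg
      have : 1/(M:ℝ) ≤ 1/2 := one_div_le_one_div_of_le (by norm_num) hM2
      linarith
    have hMq : (M:ℝ) * (1/(M:ℝ)) = 1 := mul_one_div_cancel hMpos.ne'
    rw [show (M:ℝ) * (1/(M:ℝ)) * q = q by rw [hMq, one_mul]]
    have h3 : (M:ℝ) * q * I ≤ (M:ℝ) * q * (D * (1/(M:ℝ))) :=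
      mul_le_mul_of_nonneg_left hup (mul_nonneg hMpos.le hq0)
    have h4 : (M:ℝ) * q * (D * (1/(M:ℝ))) = q * D := by
      field_simp
    linarith [h3, h4]
  have hQ : Tendsto (fun M : ℕ => (1 - 1/(M:ℝ))^(M-1)) atTop (nhds (Real.exp (-1))) := by
    have h1 := Real.tendsto_one_add_div_pow_exp (-1)
    have h2 : Tendsto (fun n:ℕ => 1 + (-1)/(n:ℝ)) atTop (nhds 1) := by
      have h0 := (tendsto_const_div_atTop_nhds_zero_nat (-1)).const_add (1:ℝ)
      simpa using h0
    have h3 := h1.div h2 one_ne_zero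
    rw [div_one] at h3
    refine Tendsto.congr' ?_ h3
    filter_upwards [eventually_ge_atTop 2] with n hn
    have hn2 : (2:ℝ) ≤ (n:ℝ) := by exact_mod_cast hn
    have hpos : 0 < 1 + (-1)/(n:ℝ) := by
      have h5 : 1/(n:ℝ) ≤ 1/2 := one_div_le_one_div_of_le (by norm_num) hn2
      have h6 : (-1)/(n:ℝ) = -(1/(n:ℝ)) := by ring
      rw [h6]; linarith
    have hne : (1:ℝ) + (-1)/(n:ℝ) ≠ 0 := hpos.ne'
    have hpow : (1 + (-1)/(n:ℝ))^n = (1 + (-1)/(n:ℝ))^(n-1) * (1 + (-1)/(n:ℝ)) := by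
      rw [← pow_succ]
      congr 1
      omega
    simp only [Pi.div_apply]
    rw [hpow, mul_div_assoc, div_self hne, mul_one]
    congr 1
    ring
  have hDt : Tendsto (fun M : ℕ =>
      (1/sθ + (Real.log M / lam) / ((Real.log M / lam) * sv + sn))⁻¹) atTop
      (nhds (sθ * sv / (sθ + sv))) := by
    have hT : Tendsto (fun M:ℕ => Real.log M / lam) atTop atTop :=
      (Real.tendsto_log_atTop.comp tendsto_natCast_atTop_atTop).atTop_div_const hlam
    have hg : Tendsto (fun T:ℝ => (1/sθ + T / (T*sv + sn))⁻¹) atTop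
        (nhds (sθ * sv / (sθ + sv))) := by
      have h0 : Tendsto (fun T:ℝ => sn/T) atTop (nhds 0) := by
        simpa [div_eq_mul_inv] using tendsto_inv_atTop_zero.const_mul sn
      have h1 : Tendsto (fun T:ℝ => sv + sn/T) atTop (nhds sv) := by
        simpa using tendsto_const_nhds.add h0
      have h2 : Tendsto (fun T:ℝ => (sv + sn/T)⁻¹) atTop (nhds sv⁻¹) := h1.inv₀ hv.ne'
      have h3 : Tendsto (fun T:ℝ => (1/sθ + (sv + sn/T)⁻¹)⁻¹) atTop
          (nhds ((1/sθ + sv⁻¹)⁻¹)) := by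
        apply Tendsto.inv₀ (tendsto_const_nhds.add h2)
        positivity
      have h4 : (1/sθ + sv⁻¹)⁻¹ = sθ * sv / (sθ + sv) := by
        rw [← one_div sv, div_add_div _ _ (by positivity) (by positivity), one_mul, mul_one,
          inv_div, show sv + sθ = sθ + sv by ring]
      rw [h4] at h3
      refine Tendsto.congr' ?_ h3
      filter_upwards [eventually_gt_atTop 0] with T hT0
      have hden : T * sv + sn ≠ 0 := by positivity
      congr 1
      have h5 : sv + sn/T = (T*sv + sn)/T := by field_simp
      rw [h5, inv_div]
    exact hg.comp hT
  have hLval : sθ * (1 - 1 / Real.exp 1) + sθ * sv / (sθ + sv) / Real.exp 1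
      = sθ * (1 - Real.exp (-1)) + Real.exp (-1) * (sθ * sv / (sθ + sv)) := by
    rw [Real.exp_neg]; ring
  rw [hLval]
  have hLBt : Tendsto (fun M:ℕ => sθ * (1 - (1 - 1/(M:ℝ))^(M-1))
      + (1 - 1/(M:ℝ))^(M-1) * (sθ * sv / (sθ + sv))) atTop
      (nhds (sθ * (1 - Real.exp (-1)) + Real.exp (-1) * (sθ * sv / (sθ + sv)))) :=
    ((tendsto_const_nhds.sub hQ).const_mul sθ).add (hQ.mul_const _)
  have hUBt : Tendsto (fun M:ℕ => sθ * (1 - (1 - 1/(M:ℝ))^(M-1))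
      + (1 - 1/(M:ℝ))^(M-1) *
        (1/sθ + (Real.log M / lam) / ((Real.log M / lam) * sv + sn))⁻¹) atTop
      (nhds (sθ * (1 - Real.exp (-1)) + Real.exp (-1) * (sθ * sv / (sθ + sv)))) :=
    ((tendsto_const_nhds.sub hQ).const_mul sθ).add (hQ.mul hDt)
  apply tendsto_of_tendsto_of_tendsto_of_le_of_le' hLBt hUBt
  · filter_upwards [eventually_ge_atTop 2] with M hM
    exact part1 M hM (Ts M) (hTs M hM)
  · filter_upwards [eventually_ge_atTop 2] with M hM
    exact le_trans (hmin M hM _ (hlogpos M hM)) (hUBest M hM)
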